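/- (Right-cancellation law for ⊕) Let A, B, C be flow graphs. If B ⊕ A = C ⊕ A, then B = C. -/

import Mathlib

/-- A flow graph: a finite directed multigraph (loops and parallel edges allowed)
with a distinguished source vertex `s` and target vertex `t`.
(Connectedness is stated as a separate predicate `FlowGraph.Connected`.) -/
structure FlowGraph where
  V : Type
  E : Type
  [finV : Finite V]
  [finE : Finite E]
  src : E → V
  tgt : E → V
  s : V
  t : V

attribute [instance] FlowGraph.finV FlowGraph.finE

namespace FlowGraph

/-- Adjacency in the underlying undirected multigraph, using only edges in `ES`. -/
def adjOn (A : FlowGraph) (ES : Set A.E) (u v : A.V) : Prop :=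
  ∃ e ∈ ES, (A.src e = u ∧ A.tgt e = v) ∨ (A.src e = v ∧ A.tgt e = u)

/-- Reachability in the underlying undirected multigraph, using only edges in `ES`. -/
def reachOn (A : FlowGraph) (ES : Set A.E) : A.V → A.V → Prop :=
  Relation.ReflTransGen (A.adjOn ES)

/-- The multigraph underlying a flow graph is connected. -/
def Connected (A : FlowGraph) : Prop := ∀ u v : A.V, A.reachOn Set.univ u v

/-- Isomorphism of flow graphs: a graph isomorphism mapping source to source
and target to target.  Equality "as flow graphs" means `Iso`. -/
def Iso (A B : FlowGraph) : Prop :=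
  ∃ (φV : A.V ≃ B.V) (φE : A.E ≃ B.E),
    (∀ e, B.src (φE e) = φV (A.src e)) ∧
    (∀ e, B.tgt (φE e) = φV (A.tgt e)) ∧
    φV A.s = B.s ∧ φV A.t = B.t

/-- The relation identifying `t_A` with `s_B` in the disjoint union of vertex sets. -/
def addRel (A B : FlowGraph) : (A.V ⊕ B.V) → (A.V ⊕ B.V) → Prop :=
  fun x y => x = Sum.inl A.t ∧ y = Sum.inr B.s

/-- The sum `A ⊕ B` of flow graphs: disjoint copies of `A` and `B`
with `t_A` identified with `s_B`; source `s_A`, target `t_B`. -/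
def add (A B : FlowGraph) : FlowGraph where
  V := Quot (addRel A B)
  E := A.E ⊕ B.E
  src := fun e =>
    Quot.mk _ (Sum.elim (fun a => Sum.inl (A.src a)) (fun b => Sum.inr (B.src b)) e)
  tgt := fun e =>
    Quot.mk _ (Sum.elim (fun a => Sum.inl (A.tgt a)) (fun b => Sum.inr (B.tgt b)) e)
  s := Quot.mk _ (Sum.inl A.s)
  t := Quot.mk _ (Sum.inr B.t)

/-- The relation gluing, for every edge `e = (u,v)` of `A`, the source of the
`e`-th copy of `B` to `u` and its target to `v`. -/
def mulRel (A B : FlowGraph) : (A.V ⊕ A.E × B.V) → (A.V ⊕ A.E × B.V) → Prop :=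
  fun x y => ∃ e : A.E,
    (x = Sum.inr (e, B.s) ∧ y = Sum.inl (A.src e)) ∨
    (x = Sum.inr (e, B.t) ∧ y = Sum.inl (A.tgt e))

/-- The product `A ⊗ B` of flow graphs: every directed edge `e = (u,v)` of `A` is
replaced by a fresh copy of `B`, with `u` identified with the source of the copy
and `v` with its target; source `s_A`, target `t_A`. -/
def mul (A B : FlowGraph) : FlowGraph where
  V := Quot (mulRel A B)
  E := A.E × B.E
  src := fun p => Quot.mk _ (Sum.inr (p.1, B.src p.2))
  tgt := fun p => Quot.mk _ (Sum.inr (p.1, B.tgt p.2))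
  s := Quot.mk _ (Sum.inl A.s)
  t := Quot.mk _ (Sum.inl A.t)

/-- The trivial flow graph `F₀`: one vertex, no edges, source = target. -/
def F0 : FlowGraph where
  V := Unit
  E := Empty
  src := Empty.elim
  tgt := Empty.elim
  s := ()
  t := ()

/-- The flow graph `F₁`: a single directed edge from source to target. -/
def F1 : FlowGraph where
  V := Bool
  E := Unit
  src := fun _ => false
  tgt := fun _ => true
  s := false
  t := true

/-- The graphical natural number `n`: the directed path with `n+1` vertices and
`n` edges, source its initial vertex and target its final vertex. -/
def pathGraph (n : ℕ) : FlowGraph where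
  V := Fin (n + 1)
  E := Fin n
  src := fun e => e.castSucc
  tgt := fun e => e.succ
  s := 0
  t := Fin.last n

/-- A flow graph is infinitesimal if it is nontrivial and its source equals its target. -/
def Infinitesimal (A : FlowGraph) : Prop := ¬ A.Iso F0 ∧ A.s = A.t

/-- `w` is a splitting vertex of `A`: `w ≠ s_A, t_A`, and after deleting `w`
(i.e. using only edges not incident to `w`), `s_A` and `t_A` lie in distinct
components (hence deletion produces at least two components). -/
def IsSplittingVertex (A : FlowGraph) (w : A.V) : Prop :=
  w ≠ A.s ∧ w ≠ A.t ∧ ¬ A.reachOn {e | A.src e ≠ w ∧ A.tgt e ≠ w} A.s A.t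

/-- `e₀` is a splitting edge of `A`: deleting `e₀` leaves exactly two components,
one containing `s_A` and the other containing `t_A`. -/
def IsSplittingEdge (A : FlowGraph) (e₀ : A.E) : Prop :=
  ¬ A.reachOn {e | e ≠ e₀} A.s A.t ∧
  ∀ v : A.V, A.reachOn {e | e ≠ e₀} v A.s ∨ A.reachOn {e | e ≠ e₀} v A.t

/-- The initial vertex of a directed edge traversed with direction `dir`
(`true` = forwards, `false` = backwards). -/
def stepSrc (A : FlowGraph) (p : A.E × Bool) : A.V := if p.2 then A.src p.1 else A.tgt p.1

/-- The final vertex of a directed edge traversed with direction `dir`. -/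
def stepTgt (A : FlowGraph) (p : A.E × Bool) : A.V := if p.2 then A.tgt p.1 else A.src p.1

/-- `l` is a walk from `u` to `v` in the underlying undirected multigraph:
a list of edges each traversed in some direction, consecutively matching. -/
def IsWalk (A : FlowGraph) : A.V → A.V → List (A.E × Bool) → Prop
  | u, v, [] => u = v
  | u, v, p :: l => A.stepSrc p = u ∧ A.IsWalk (A.stepTgt p) v l

/-- The list of vertices visited by a walk starting at `u`. -/
def walkVertices (A : FlowGraph) (u : A.V) : List (A.E × Bool) → List A.V
  | [] => [u]
  | p :: l => u :: A.walkVertices (A.stepTgt p) l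

/-- The edge `e` has the ST property: some non-self-intersecting path from `s_A`
to `t_A` in the underlying undirected multigraph traverses `e`. -/
def HasST (A : FlowGraph) (e : A.E) : Prop :=
  ∃ l : List (A.E × Bool), A.IsWalk A.s A.t l ∧ (A.walkVertices A.s l).Nodup ∧
    ∃ dir : Bool, (e, dir) ∈ l

/-- `A` is an st-flow graph: every edge has the ST property. -/
def IsSTGraph (A : FlowGraph) : Prop := ∀ e : A.E, A.HasST e

/-- The vertex set of the st-core: `s_A`, `t_A`, and all endpoints of ST edges. -/
def stCoreV (A : FlowGraph) : Set A.V :=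
  {v | v = A.s ∨ v = A.t ∨ ∃ e, A.HasST e ∧ (A.src e = v ∨ A.tgt e = v)}

/-- The st-core of `A`: delete all edges without the ST property and keep the
subgraph induced by the remaining edges together with `s_A` and `t_A`. -/
def stCore (A : FlowGraph) : FlowGraph where
  V := {v // v ∈ A.stCoreV}
  E := {e // A.HasST e}
  src := fun e => ⟨A.src e.1, Or.inr (Or.inr ⟨e.1, e.2, Or.inl rfl⟩)⟩
  tgt := fun e => ⟨A.tgt e.1, Or.inr (Or.inr ⟨e.1, e.2, Or.inr rfl⟩)⟩
  s := ⟨A.s, Or.inl rfl⟩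
  t := ⟨A.t, Or.inr (Or.inl rfl)⟩

/-- An embedding of (the multigraph of) `A` into (the multigraph of) `B`:
injective on vertices and on edges, preserving directed incidence. -/
structure Emb (A B : FlowGraph) where
  vmap : A.V → B.V
  emap : A.E → B.E
  vinj : Function.Injective vmap
  einj : Function.Injective emap
  src_map : ∀ e, B.src (emap e) = vmap (A.src e)
  tgt_map : ∀ e, B.tgt (emap e) = vmap (A.tgt e)

/-- `(V₁, E₁)` is a subgraph: all endpoints of edges in `E₁` lie in `V₁`. -/
def IsSubgraph (A : FlowGraph) (VS : Set A.V) (ES : Set A.E) : Prop :=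
  ∀ e ∈ ES, A.src e ∈ VS ∧ A.tgt e ∈ VS

/-- The subgraph `(VS, ES)` is connected. -/
def SubConnected (A : FlowGraph) (VS : Set A.V) (ES : Set A.E) : Prop :=
  ∀ u ∈ VS, ∀ v ∈ VS, A.reachOn ES u v

/-- An `(s,t)`-splitting of `A`: two connected subgraphs, the first containing
`s_A`, the second containing `t_A`, whose edge sets partition the edges of `A`. -/
def IsSplitting (A : FlowGraph) (V₁ V₂ : Set A.V) (E₁ E₂ : Set A.E) : Prop :=
  A.IsSubgraph V₁ E₁ ∧ A.IsSubgraph V₂ E₂ ∧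
  A.SubConnected V₁ E₁ ∧ A.SubConnected V₂ E₂ ∧
  A.s ∈ V₁ ∧ A.t ∈ V₂ ∧
  E₁ ∪ E₂ = Set.univ ∧ E₁ ∩ E₂ = ∅

/-- The weak order `A ⩽ B`: there is an `(s,t)`-splitting `(H₁, H₂)` of `A` and
graph embeddings `φᵢ : Hᵢ → B` with `φ₁ s_A = s_B`, `φ₂ t_A = t_B`, and whose
edge images are disjoint. -/
def weakLE (A B : FlowGraph) : Prop :=
  ∃ (V₁ V₂ : Set A.V) (E₁ E₂ : Set A.E)
    (φ₁V φ₂V : A.V → B.V) (φ₁E φ₂E : A.E → B.E),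
    A.IsSplitting V₁ V₂ E₁ E₂ ∧
    Set.InjOn φ₁V V₁ ∧ Set.InjOn φ₂V V₂ ∧
    Set.InjOn φ₁E E₁ ∧ Set.InjOn φ₂E E₂ ∧
    (∀ e ∈ E₁, B.src (φ₁E e) = φ₁V (A.src e) ∧ B.tgt (φ₁E e) = φ₁V (A.tgt e)) ∧
    (∀ e ∈ E₂, B.src (φ₂E e) = φ₂V (A.src e) ∧ B.tgt (φ₂E e) = φ₂V (A.tgt e)) ∧
    φ₁V A.s = B.s ∧ φ₂V A.t = B.t ∧
    (φ₁E '' E₁) ∩ (φ₂E '' E₂) = ∅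

/-- `k`-fold sum `C ⊕ C ⊕ ⋯ ⊕ C` (`k` summands); `smul 0 C = F₀`. -/
def smul : ℕ → FlowGraph → FlowGraph
  | 0, _ => F0
  | n + 1, C => C.add (smul n C)

/-- Sum of a head flow graph with a list of further summands:
`sumList A₀ [A₁, …, Aₖ] = A₀ ⊕ A₁ ⊕ ⋯ ⊕ Aₖ`. -/
def sumList (A : FlowGraph) (L : List FlowGraph) : FlowGraph := L.foldl add A

/-- `A` is ⊕-irreducible: it is not (isomorphic to) a sum of two nontrivial flow graphs. -/
def IsIrreducible (A : FlowGraph) : Prop :=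
  ¬ ∃ B C : FlowGraph, B.Connected ∧ C.Connected ∧
      ¬ B.Iso F0 ∧ ¬ C.Iso F0 ∧ A.Iso (B.add C)

end FlowGraph



set_option linter.unusedSectionVars false

namespace GMaux

open Relation

variable {α β γ : Type*} [Finite α]

def Rstep (f : β ⊕ α ≃ γ ⊕ α) : β ⊕ α → β ⊕ α → Prop :=
  fun x x' => ∃ a, f x = Sum.inr a ∧ x' = Sum.inr a

def Esc (f : β ⊕ α ≃ γ ⊕ α) (x : β ⊕ α) (c : γ) : Prop :=
  ∃ x', ReflTransGen (Rstep f) x x' ∧ f x' = Sum.inl c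

theorem esc_head (f : β ⊕ α ≃ γ ⊕ α) {x : β ⊕ α} {a : α} {c : γ}
    (hx : f x = Sum.inr a) (h : Esc f (Sum.inr a) c) : Esc f x c := by
  obtain ⟨y, hy, hyc⟩ := h
  exact ⟨y, ReflTransGen.head ⟨a, hx, rfl⟩ hy, hyc⟩

theorem esc_unique (f : β ⊕ α ≃ γ ⊕ α) {x : β ⊕ α} {c c' : γ}
    (h : Esc f x c) (h' : Esc f x c') : c = c' := by
  obtain ⟨y, hy, hyc⟩ := h
  induction hy using ReflTransGen.head_induction_on generalizing c' with
  | refl =>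
    obtain ⟨y', hy', hyc'⟩ := h'
    cases hy'.cases_head with
    | inl he => subst he; rw [hyc] at hyc'; exact Sum.inl.inj hyc'
    | inr he =>
      obtain ⟨z, ⟨a, ha, rfl⟩, hrest⟩ := he
      rw [hyc] at ha; exact absurd ha (by simp)
  | @head x₀ x₁ h1 h2 ih =>
    obtain ⟨a, ha, rfl⟩ := h1
    apply ih
    obtain ⟨y', hy', hyc'⟩ := h'
    cases hy'.cases_head with
    | inl he => subst he; rw [hyc'] at ha; exact absurd ha (by simp)
    | inr he =>
      obtain ⟨z, ⟨a', ha', rfl⟩, hrest⟩ := he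
      rw [ha] at ha'
      obtain rfl : a = a' := by simpa using ha'
      exact ⟨y', hrest, hyc'⟩

theorem esc_total (f : β ⊕ α ≃ γ ⊕ α) (b : β) : ∃ c, Esc f (Sum.inl b) c := by
  by_contra hcon
  push_neg at hcon
  have step : ∀ x : β ⊕ α, (∀ c, ¬ Esc f x c) →
      ∃ a, f x = Sum.inr a ∧ ∀ c, ¬ Esc f (Sum.inr a) c := by
    intro x hx
    cases hfx : f x with
    | inl c => exact absurd ⟨x, ReflTransGen.refl, hfx⟩ (hx c)
    | inr a => exact ⟨a, rfl, fun c hc => hx c (esc_head f hfx hc)⟩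
  let S := {a : α // ∀ c, ¬ Esc f (Sum.inr a) c}
  let m : S → S := fun a =>
    ⟨(step (Sum.inr a.1) a.2).choose, ((step (Sum.inr a.1) a.2).choose_spec).2⟩
  have hm : ∀ a : S, f (Sum.inr a.1) = Sum.inr (m a).1 := fun a =>
    ((step (Sum.inr a.1) a.2).choose_spec).1
  have minj : Function.Injective m := by
    intro a₁ a₂ h12
    have : f (Sum.inr a₁.1) = f (Sum.inr a₂.1) := by rw [hm a₁, hm a₂, h12]
    ext
    simpa using f.injective this
  obtain ⟨a₀, ha₀, ha₀'⟩ := step (Sum.inl b) hcon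
  obtain ⟨s, hs⟩ := Finite.injective_iff_surjective.mp minj ⟨a₀, ha₀'⟩
  have h1 : f (Sum.inr s.1) = Sum.inr a₀ := by
    rw [hm s, hs]
  have : (Sum.inr s.1 : β ⊕ α) = Sum.inl b := f.injective (by rw [h1, ha₀])
  simp at this

noncomputable def g (f : β ⊕ α ≃ γ ⊕ α) (b : β) : γ := (esc_total f b).choose

theorem g_spec (f : β ⊕ α ≃ γ ⊕ α) (b : β) : Esc f (Sum.inl b) (g f b) :=
  (esc_total f b).choose_spec

theorem g_eq (f : β ⊕ α ≃ γ ⊕ α) {b : β} {c : γ} (h : Esc f (Sum.inl b) c) :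
    g f b = c := esc_unique f (g_spec f b) h

theorem esc_rev (f : β ⊕ α ≃ γ ⊕ α) {x : β ⊕ α} {c : γ} (h : Esc f x c) :
    ∃ y, ReflTransGen (Rstep f.symm) (Sum.inl c) y ∧ f.symm y = x := by
  obtain ⟨x', hch, hx'⟩ := h
  induction hch using ReflTransGen.head_induction_on with
  | refl => exact ⟨Sum.inl c, ReflTransGen.refl, by rw [← hx', Equiv.symm_apply_apply]⟩
  | @head x₀ x₁ h1 h2 ih =>
    obtain ⟨a, ha, rfl⟩ := h1
    obtain ⟨y, hy, hyx⟩ := ih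
    exact ⟨Sum.inr a, hy.tail ⟨a, by rw [hyx], rfl⟩,
      by rw [← ha, Equiv.symm_apply_apply]⟩

theorem g_left_inv (f : β ⊕ α ≃ γ ⊕ α) (b : β) : g f.symm (g f b) = b := by
  obtain ⟨y, hy, hyx⟩ := esc_rev f (g_spec f b)
  exact g_eq f.symm ⟨y, hy, hyx⟩

noncomputable def gEquiv (f : β ⊕ α ≃ γ ⊕ α) : β ≃ γ where
  toFun := g f
  invFun := g f.symm
  left_inv := g_left_inv f
  right_inv := fun c => by
    have := g_left_inv f.symm c
    rwa [Equiv.symm_symm] at this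

theorem sync {α₂ β₂ γ₂ : Type*} [Finite α₂]
    (f : β ⊕ α ≃ γ ⊕ α) (f₂ : β₂ ⊕ α₂ ≃ γ₂ ⊕ α₂)
    (σX : β ⊕ α → β₂ ⊕ α₂) (σY : γ ⊕ α → γ₂ ⊕ α₂)
    (h1 : ∀ x, σY (f x) = f₂ (σX x))
    (h2 : ∀ a a₂, σX (Sum.inr a) = Sum.inr a₂ ↔ σY (Sum.inr a) = Sum.inr a₂)
    (h3 : ∀ a b₂ c₂, σX (Sum.inr a) = Sum.inl b₂ → σY (Sum.inr a) = Sum.inl c₂ →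
      g f₂ b₂ = c₂)
    {x x' : β ⊕ α} (hch : ReflTransGen (Rstep f) x x') {c : γ} {c₂ : γ₂}
    (hx' : f x' = Sum.inl c) (hc : σY (Sum.inl c) = Sum.inl c₂) :
    Esc f₂ (σX x) c₂ := by
  induction hch using ReflTransGen.head_induction_on with
  | refl =>
    refine ⟨σX x', ReflTransGen.refl, ?_⟩
    rw [← h1, hx', hc]
  | @head x₀ x₁ h1' h2' ih =>
    obtain ⟨a, ha, rfl⟩ := h1'
    have hfx : f₂ (σX x₀) = σY (Sum.inr a) := by rw [← h1, ha]
    have ihe : Esc f₂ (σX (Sum.inr a)) c₂ := ih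
    cases hy : σY (Sum.inr a) with
    | inr a₂ =>
      have hXa : σX (Sum.inr a) = Sum.inr a₂ := (h2 a a₂).2 hy
      rw [hXa] at ihe
      exact esc_head f₂ (by rw [hfx, hy]) ihe
    | inl c₂' =>
      have hXa : ∃ b₂, σX (Sum.inr a) = Sum.inl b₂ := by
        cases hX : σX (Sum.inr a) with
        | inl b₂ => exact ⟨b₂, rfl⟩
        | inr a₂ => rw [(h2 a a₂).1 hX] at hy; exact absurd hy (by simp)
      obtain ⟨b₂, hb₂⟩ := hXa
      have e1 : g f₂ b₂ = c₂' := h3 a b₂ c₂' hb₂ hy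
      rw [hb₂] at ihe
      have e2 : g f₂ b₂ = c₂ := g_eq f₂ ihe
      refine ⟨σX x₀, ReflTransGen.refl, ?_⟩
      rw [hfx, hy, ← e1, e2]

theorem g_of_sync {α₂ β₂ γ₂ : Type*} [Finite α₂]
    (f : β ⊕ α ≃ γ ⊕ α) (f₂ : β₂ ⊕ α₂ ≃ γ₂ ⊕ α₂)
    (σX : β ⊕ α → β₂ ⊕ α₂) (σY : γ ⊕ α → γ₂ ⊕ α₂)
    (h1 : ∀ x, σY (f x) = f₂ (σX x))
    (h2 : ∀ a a₂, σX (Sum.inr a) = Sum.inr a₂ ↔ σY (Sum.inr a) = Sum.inr a₂)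
    (h3 : ∀ a b₂ c₂, σX (Sum.inr a) = Sum.inl b₂ → σY (Sum.inr a) = Sum.inl c₂ →
      g f₂ b₂ = c₂)
    {b : β} {b₂ : β₂} {c₂ : γ₂}
    (hb : σX (Sum.inl b) = Sum.inl b₂)
    (hc : σY (Sum.inl (g f b)) = Sum.inl c₂) :
    g f₂ b₂ = c₂ := by
  obtain ⟨x', hch, hx'⟩ := g_spec f b
  have := sync f f₂ σX σY h1 h2 h3 hch hx' hc
  rw [hb] at this
  exact g_eq f₂ this

end GMaux

namespace FlowGraph

section AddInfra

variable (P Q : FlowGraph)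

theorem add_mk_eq_mk {x y : P.V ⊕ Q.V} :
    (Quot.mk (addRel P Q) x = Quot.mk (addRel P Q) y) ↔
      (x = y ∨ (x = Sum.inl P.t ∧ y = Sum.inr Q.s) ∨
        (x = Sum.inr Q.s ∧ y = Sum.inl P.t)) := by
  constructor
  · intro h
    have h' := Quot.eq.mp h
    clear h
    induction h' with
    | rel a b hab => obtain ⟨h1, h2⟩ := hab; exact Or.inr (Or.inl ⟨h1, h2⟩)
    | refl a => exact Or.inl rfl
    | symm a b _ ih => tauto
    | trans a b c _ _ ih1 ih2 =>
      rcases ih1 with rfl | ⟨rfl, rfl⟩ | ⟨rfl, rfl⟩ <;>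
        rcases ih2 with rfl | ⟨h3, rfl⟩ | ⟨h3, rfl⟩ <;> simp_all
  · intro h
    rcases h with rfl | ⟨rfl, rfl⟩ | ⟨rfl, rfl⟩
    · rfl
    · exact Quot.sound ⟨rfl, rfl⟩
    · exact (Quot.sound ⟨rfl, rfl⟩).symm

theorem add_mk_inl_inj {b b' : P.V} :
    (Quot.mk (addRel P Q) (Sum.inl b) = Quot.mk (addRel P Q) (Sum.inl b')) ↔ b = b' := by
  rw [add_mk_eq_mk]; simp

theorem add_mk_inr_inj {a a' : Q.V} :
    (Quot.mk (addRel P Q) (Sum.inr a) = Quot.mk (addRel P Q) (Sum.inr a')) ↔ a = a' := by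
  rw [add_mk_eq_mk]; simp

theorem add_mk_inl_eq_inr {b : P.V} {a : Q.V} :
    (Quot.mk (addRel P Q) (Sum.inl b) = Quot.mk (addRel P Q) (Sum.inr a)) ↔
      b = P.t ∧ a = Q.s := by
  rw [add_mk_eq_mk]; simp

theorem junction_eq :
    Quot.mk (addRel P Q) (Sum.inl P.t) = Quot.mk (addRel P Q) (Sum.inr Q.s) :=
  Quot.sound ⟨rfl, rfl⟩

open Classical in
/-- Normal form for vertices of a sum. -/
noncomputable def addNorm : P.V ⊕ Q.V → P.V ⊕ {a : Q.V // a ≠ Q.s} :=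
  Sum.elim (fun b => Sum.inl b)
    (fun a => if h : a = Q.s then Sum.inl P.t else Sum.inr ⟨a, h⟩)

theorem addNorm_inl (b : P.V) : addNorm P Q (Sum.inl b) = Sum.inl b := rfl

theorem addNorm_inr_s : addNorm P Q (Sum.inr Q.s) = Sum.inl P.t := by
  simp [addNorm]

theorem addNorm_inr_of_ne {a : Q.V} (h : a ≠ Q.s) :
    addNorm P Q (Sum.inr a) = Sum.inr ⟨a, h⟩ := by
  simp [addNorm, h]

/-- Normal-form equivalence for the vertices of a sum. -/
noncomputable def addEquiv : (P.add Q).V ≃ P.V ⊕ {a : Q.V // a ≠ Q.s} where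
  toFun := Quot.lift (addNorm P Q) (by
    rintro x y ⟨rfl, rfl⟩
    rw [addNorm_inl, addNorm_inr_s])
  invFun := Sum.elim (fun b => Quot.mk _ (Sum.inl b)) (fun a => Quot.mk _ (Sum.inr a.1))
  left_inv := by
    apply Quot.ind
    rintro (b | a)
    · rfl
    · by_cases h : a = Q.s
      · subst h
        show Sum.elim _ _ (addNorm P Q (Sum.inr Q.s)) = _
        rw [addNorm_inr_s]
        exact junction_eq P Q
      · show Sum.elim _ _ (addNorm P Q (Sum.inr a)) = _
        rw [addNorm_inr_of_ne P Q h]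
        rfl
  right_inv := by
    rintro (b | ⟨a, h⟩)
    · rfl
    · show addNorm P Q (Sum.inr a) = _
      rw [addNorm_inr_of_ne P Q h]

theorem addEquiv_mk (x : P.V ⊕ Q.V) :
    addEquiv P Q (Quot.mk _ x) = addNorm P Q x := rfl

@[simp] theorem addEquiv_mk_inl (b : P.V) :
    addEquiv P Q (Quot.mk _ (Sum.inl b)) = Sum.inl b := rfl

@[simp] theorem addEquiv_symm_inl (b : P.V) :
    (addEquiv P Q).symm (Sum.inl b) = Quot.mk _ (Sum.inl b) := rfl

@[simp] theorem addEquiv_symm_inr (a : {a : Q.V // a ≠ Q.s}) :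
    (addEquiv P Q).symm (Sum.inr a) = Quot.mk _ (Sum.inr a.1) := rfl

end AddInfra

end FlowGraph

namespace FlowGraph

section Reach

open Relation

/-- Transporting reachability along an isomorphism. -/
theorem reachOn_map (D D' : FlowGraph) (φV : D.V ≃ D'.V) (φE : D.E ≃ D'.E)
    (hsrc : ∀ e, D'.src (φE e) = φV (D.src e)) (htgt : ∀ e, D'.tgt (φE e) = φV (D.tgt e))
    {S : Set D.E} {S' : Set D'.E} (hS : ∀ e ∈ S, φE e ∈ S')
    {u v : D.V} (h : D.reachOn S u v) : D'.reachOn S' (φV u) (φV v) := by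
  refine ReflTransGen.lift φV ?_ _ _ h
  rintro a b ⟨e, he, h1 | h1⟩
  · exact ⟨φE e, hS e he, Or.inl ⟨by rw [hsrc, h1.1], by rw [htgt, h1.2]⟩⟩
  · exact ⟨φE e, hS e he, Or.inr ⟨by rw [hsrc, h1.1], by rw [htgt, h1.2]⟩⟩

theorem iso_symm_src (D D' : FlowGraph) (φV : D.V ≃ D'.V) (φE : D.E ≃ D'.E)
    (hsrc : ∀ e, D'.src (φE e) = φV (D.src e)) :
    ∀ e', D.src (φE.symm e') = φV.symm (D'.src e') := by
  intro e'
  apply φV.injective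
  rw [← hsrc, Equiv.apply_symm_apply, Equiv.apply_symm_apply]

theorem iso_symm_tgt (D D' : FlowGraph) (φV : D.V ≃ D'.V) (φE : D.E ≃ D'.E)
    (htgt : ∀ e, D'.tgt (φE e) = φV (D.tgt e)) :
    ∀ e', D.tgt (φE.symm e') = φV.symm (D'.tgt e') := by
  intro e'
  apply φV.injective
  rw [← htgt, Equiv.apply_symm_apply, Equiv.apply_symm_apply]

/-- The set of vertices only reachable from the source through `w`. -/
def Tset (D : FlowGraph) (w : D.V) : Set D.V :=
  {x | x = w ∨ ¬ D.reachOn {e | D.src e ≠ w ∧ D.tgt e ≠ w} D.s x}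

/-- The set of vertices from which the target is only reachable through `w`. -/
def Hset (D : FlowGraph) (w : D.V) : Set D.V :=
  {x | x = w ∨ ¬ D.reachOn {e | D.src e ≠ w ∧ D.tgt e ≠ w} x D.t}

theorem Tset_map (D D' : FlowGraph) (φV : D.V ≃ D'.V) (φE : D.E ≃ D'.E)
    (hsrc : ∀ e, D'.src (φE e) = φV (D.src e)) (htgt : ∀ e, D'.tgt (φE e) = φV (D.tgt e))
    (hs : φV D.s = D'.s) (w : D.V) {x : D.V} (hx : x ∈ D.Tset w) :
    φV x ∈ D'.Tset (φV w) := by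
  rcases hx with rfl | hx
  · exact Or.inl rfl
  · refine Or.inr fun hreach => hx ?_
    have hsrc' := iso_symm_src D D' φV φE hsrc
    have htgt' := iso_symm_tgt D D' φV φE htgt
    have := reachOn_map D' D φV.symm φE.symm hsrc' htgt'
      (S := {e | D'.src e ≠ φV w ∧ D'.tgt e ≠ φV w})
      (S' := {e | D.src e ≠ w ∧ D.tgt e ≠ w}) ?_ hreach
    · rw [← hs, Equiv.symm_apply_apply, Equiv.symm_apply_apply] at this
      exact this
    · rintro e' ⟨h1, h2⟩
      constructor
      · rw [hsrc' e']
        intro hcon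
        exact h1 (by rw [← hcon, Equiv.apply_symm_apply])
      · rw [htgt' e']
        intro hcon
        exact h2 (by rw [← hcon, Equiv.apply_symm_apply])

theorem Hset_map (D D' : FlowGraph) (φV : D.V ≃ D'.V) (φE : D.E ≃ D'.E)
    (hsrc : ∀ e, D'.src (φE e) = φV (D.src e)) (htgt : ∀ e, D'.tgt (φE e) = φV (D.tgt e))
    (ht : φV D.t = D'.t) (w : D.V) {x : D.V} (hx : x ∈ D.Hset w) :
    φV x ∈ D'.Hset (φV w) := by
  rcases hx with rfl | hx
  · exact Or.inl rfl
  · refine Or.inr fun hreach => hx ?_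
    have hsrc' := iso_symm_src D D' φV φE hsrc
    have htgt' := iso_symm_tgt D D' φV φE htgt
    have := reachOn_map D' D φV.symm φE.symm hsrc' htgt'
      (S := {e | D'.src e ≠ φV w ∧ D'.tgt e ≠ φV w})
      (S' := {e | D.src e ≠ w ∧ D.tgt e ≠ w}) ?_ hreach
    · rw [← ht, Equiv.symm_apply_apply, Equiv.symm_apply_apply] at this
      exact this
    · rintro e' ⟨h1, h2⟩
      constructor
      · rw [hsrc' e']
        intro hcon
        exact h1 (by rw [← hcon, Equiv.apply_symm_apply])
      · rw [htgt' e']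
        intro hcon
        exact h2 (by rw [← hcon, Equiv.apply_symm_apply])

end Reach

section SumClaims

open Relation

variable (P Q : FlowGraph)

theorem add_cases (x : (P.add Q).V) :
    (∃ b, x = Quot.mk _ (Sum.inl b)) ∨ (∃ a, x = Quot.mk _ (Sum.inr a)) := by
  obtain ⟨y, rfl⟩ := Quot.exists_rep x
  cases y with
  | inl b => exact Or.inl ⟨b, rfl⟩
  | inr a => exact Or.inr ⟨a, rfl⟩

/-- Reachability within the left summand lifts to the sum. -/
theorem reachOn_inl {S : Set (P.add Q).E} (hS : ∀ e : P.E, Sum.inl e ∈ S)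
    {u v : P.V} (h : P.reachOn Set.univ u v) :
    (P.add Q).reachOn S (Quot.mk _ (Sum.inl u)) (Quot.mk _ (Sum.inl v)) := by
  refine ReflTransGen.lift (fun z => Quot.mk _ (Sum.inl z)) ?_ _ _ h
  rintro a b ⟨e, -, h1 | h1⟩
  · exact ⟨Sum.inl e, hS e, Or.inl
      ⟨by show Quot.mk _ (Sum.inl (P.src e)) = _; rw [h1.1],
       by show Quot.mk _ (Sum.inl (P.tgt e)) = _; rw [h1.2]⟩⟩
  · exact ⟨Sum.inl e, hS e, Or.inr
      ⟨by show Quot.mk _ (Sum.inl (P.src e)) = _; rw [h1.1],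
       by show Quot.mk _ (Sum.inl (P.tgt e)) = _; rw [h1.2]⟩⟩

theorem reachOn_inr {S : Set (P.add Q).E} (hS : ∀ e : Q.E, Sum.inr e ∈ S)
    {u v : Q.V} (h : Q.reachOn Set.univ u v) :
    (P.add Q).reachOn S (Quot.mk _ (Sum.inr u)) (Quot.mk _ (Sum.inr v)) := by
  refine ReflTransGen.lift (fun z => Quot.mk _ (Sum.inr z)) ?_ _ _ h
  rintro a b ⟨e, -, h1 | h1⟩
  · exact ⟨Sum.inr e, hS e, Or.inl
      ⟨by show Quot.mk _ (Sum.inr (Q.src e)) = _; rw [h1.1],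
       by show Quot.mk _ (Sum.inr (Q.tgt e)) = _; rw [h1.2]⟩⟩
  · exact ⟨Sum.inr e, hS e, Or.inr
      ⟨by show Quot.mk _ (Sum.inr (Q.src e)) = _; rw [h1.1],
       by show Quot.mk _ (Sum.inr (Q.tgt e)) = _; rw [h1.2]⟩⟩

/-- Invariant: avoiding the junction, from the source one stays in the left part. -/
theorem reach_from_s {x : (P.add Q).V}
    (h : (P.add Q).reachOn
      {e | (P.add Q).src e ≠ Quot.mk _ (Sum.inl P.t) ∧
            (P.add Q).tgt e ≠ Quot.mk _ (Sum.inl P.t)} (P.add Q).s x) :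
    (∃ b, x = Quot.mk _ (Sum.inl b) ∧ x ≠ Quot.mk _ (Sum.inl P.t)) ∨ x = (P.add Q).s := by
  induction h with
  | refl => exact Or.inr rfl
  | tail h1 h2 ih =>
    obtain ⟨e, ⟨he1, he2⟩, hor⟩ := h2
    rename_i mid y
    cases e with
    | inl pe =>
      rcases hor with ⟨hs', ht'⟩ | ⟨hs', ht'⟩
      · exact Or.inl ⟨P.tgt pe, ht'.symm, ht' ▸ he2⟩
      · exact Or.inl ⟨P.src pe, hs'.symm, hs' ▸ he1⟩
    | inr qe =>
      exfalso
      have hmid : ∃ a, mid = Quot.mk (addRel P Q) (Sum.inr a) ∧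
          mid ≠ Quot.mk (addRel P Q) (Sum.inl P.t) := by
        rcases hor with ⟨hs', ht'⟩ | ⟨hs', ht'⟩
        · exact ⟨Q.src qe, hs'.symm, hs' ▸ he1⟩
        · exact ⟨Q.tgt qe, ht'.symm, ht' ▸ he2⟩
      obtain ⟨a, hma, hmp⟩ := hmid
      rcases ih with ⟨b, hmb, hmp'⟩ | hms
      · have hmix : Quot.mk (addRel P Q) (Sum.inl b) = Quot.mk (addRel P Q) (Sum.inr a) := by
          rw [← hmb, ← hma]
        obtain ⟨hb, ha⟩ := (add_mk_inl_eq_inr P Q).mp hmix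
        exact hmp' (by rw [hmb, hb])
      · have hmix : Quot.mk (addRel P Q) (Sum.inl P.s) = Quot.mk (addRel P Q) (Sum.inr a) := by
          rw [← hma]; exact hms.symm
        obtain ⟨hps, ha⟩ := (add_mk_inl_eq_inr P Q).mp hmix
        exact hmp (by rw [hma, ha, ← junction_eq])

/-- Invariant: avoiding the junction, into the target one stays in the right part. -/
theorem reach_to_t {x : (P.add Q).V}
    (h : (P.add Q).reachOn
      {e | (P.add Q).src e ≠ Quot.mk _ (Sum.inl P.t) ∧
            (P.add Q).tgt e ≠ Quot.mk _ (Sum.inl P.t)} x (P.add Q).t) :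
    (∃ a, x = Quot.mk _ (Sum.inr a) ∧ x ≠ Quot.mk _ (Sum.inl P.t)) ∨ x = (P.add Q).t := by
  induction h using ReflTransGen.head_induction_on with
  | refl => exact Or.inr rfl
  | @head x₀ mid h1 h2 ih =>
    obtain ⟨e, ⟨he1, he2⟩, hor⟩ := h1
    cases e with
    | inr qe =>
      rcases hor with ⟨hs', ht'⟩ | ⟨hs', ht'⟩
      · exact Or.inl ⟨Q.src qe, hs'.symm, hs' ▸ he1⟩
      · exact Or.inl ⟨Q.tgt qe, ht'.symm, ht' ▸ he2⟩
    | inl pe =>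
      exfalso
      have hmid : ∃ b, mid = Quot.mk (addRel P Q) (Sum.inl b) ∧
          mid ≠ Quot.mk (addRel P Q) (Sum.inl P.t) := by
        rcases hor with ⟨hs', ht'⟩ | ⟨hs', ht'⟩
        · exact ⟨P.tgt pe, ht'.symm, ht' ▸ he2⟩
        · exact ⟨P.src pe, hs'.symm, hs' ▸ he1⟩
      obtain ⟨b, hmb, hmp⟩ := hmid
      rcases ih with ⟨a, hma, hmp'⟩ | hmt
      · have hmix : Quot.mk (addRel P Q) (Sum.inl b) = Quot.mk (addRel P Q) (Sum.inr a) := by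
          rw [← hmb, ← hma]
        obtain ⟨hb, ha⟩ := (add_mk_inl_eq_inr P Q).mp hmix
        exact hmp' (by rw [hma, ha, ← junction_eq, ← hb])
      · have hmix : Quot.mk (addRel P Q) (Sum.inl b) = Quot.mk (addRel P Q) (Sum.inr Q.t) := by
          rw [← hmb]; exact hmt
        obtain ⟨hb, hqt⟩ := (add_mk_inl_eq_inr P Q).mp hmix
        exact hmp (by rw [hmb, hb])

theorem inr_mem_Tset (a : Q.V) :
    (Quot.mk _ (Sum.inr a) : (P.add Q).V) ∈ (P.add Q).Tset (Quot.mk _ (Sum.inl P.t)) := by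
  by_cases hp : (Quot.mk (addRel P Q) (Sum.inr a)) = Quot.mk _ (Sum.inl P.t)
  · exact Or.inl hp
  · refine Or.inr fun hreach => ?_
    rcases reach_from_s P Q hreach with ⟨b, hb, hbp⟩ | hs'
    · obtain ⟨hbt, has⟩ := (add_mk_inl_eq_inr P Q).mp hb.symm
      exact hbp (by rw [hb, hbt])
    · have hmix : Quot.mk (addRel P Q) (Sum.inl P.s) = Quot.mk (addRel P Q) (Sum.inr a) :=
        hs'.symm
      obtain ⟨hps, has⟩ := (add_mk_inl_eq_inr P Q).mp hmix
      exact hp (by rw [has, ← junction_eq])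

theorem inl_mem_Hset (b : P.V) :
    (Quot.mk _ (Sum.inl b) : (P.add Q).V) ∈ (P.add Q).Hset (Quot.mk _ (Sum.inl P.t)) := by
  by_cases hp : (Quot.mk (addRel P Q) (Sum.inl b)) = Quot.mk _ (Sum.inl P.t)
  · exact Or.inl hp
  · refine Or.inr fun hreach => ?_
    rcases reach_to_t P Q hreach with ⟨a, ha, hap⟩ | ht'
    · obtain ⟨hbt, has⟩ := (add_mk_inl_eq_inr P Q).mp ha
      exact hap (by rw [ha, has, ← junction_eq, ← hbt])
    · have hmix : Quot.mk (addRel P Q) (Sum.inl b) = Quot.mk (addRel P Q) (Sum.inr Q.t) := ht'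
      obtain ⟨hbt, hqt⟩ := (add_mk_inl_eq_inr P Q).mp hmix
      exact hp (by rw [hbt])

theorem inl_not_mem_Tset (hP : P.Connected) {v : (P.add Q).V}
    (hv : ∀ b : P.V, v ≠ Quot.mk _ (Sum.inl b)) (b : P.V) :
    (Quot.mk _ (Sum.inl b) : (P.add Q).V) ∉ (P.add Q).Tset v := by
  rintro (hb | hb)
  · exact hv b hb.symm
  · apply hb
    refine reachOn_inl P Q ?_ (hP P.s b)
    intro e
    exact ⟨fun hcon => hv _ hcon.symm, fun hcon => hv _ hcon.symm⟩

theorem inr_not_mem_Hset (hQ : Q.Connected) {v : (P.add Q).V}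
    (hv : ∀ a : Q.V, v ≠ Quot.mk _ (Sum.inr a)) (a : Q.V) :
    (Quot.mk _ (Sum.inr a) : (P.add Q).V) ∉ (P.add Q).Hset v := by
  rintro (ha | ha)
  · exact hv a ha.symm
  · apply ha
    refine reachOn_inr P Q ?_ (hQ a Q.t)
    intro e
    exact ⟨fun hcon => hv _ hcon.symm, fun hcon => hv _ hcon.symm⟩

end SumClaims

end FlowGraph

namespace FlowGraph

section Position

variable (P Q P' : FlowGraph)

/-- Impossible: the image of the junction lies strictly inside the common part. -/
theorem case_A (hP' : P'.Connected)
    (φV : (P.add Q).V ≃ (P'.add Q).V) (φE : (P.add Q).E ≃ (P'.add Q).E)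
    (hsrc : ∀ e, (P'.add Q).src (φE e) = φV ((P.add Q).src e))
    (htgt : ∀ e, (P'.add Q).tgt (φE e) = φV ((P.add Q).tgt e))
    (hs : φV (P.add Q).s = (P'.add Q).s)
    (a₀ : Q.V) (ha₀ : a₀ ≠ Q.s)
    (hv : φV (Quot.mk _ (Sum.inl P.t)) = Quot.mk _ (Sum.inr a₀)) : False := by
  have hvne : ∀ b : P'.V,
      (Quot.mk (addRel P' Q) (Sum.inr a₀)) ≠ Quot.mk _ (Sum.inl b) := by
    intro b hcon
    exact ha₀ ((add_mk_inl_eq_inr P' Q).mp hcon.symm).2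
  have key : ∀ a : Q.V, ∃ a' : Q.V,
      φV (Quot.mk _ (Sum.inr a)) = Quot.mk _ (Sum.inr a') ∧ a' ≠ Q.s := by
    intro a
    have hmem : φV (Quot.mk _ (Sum.inr a)) ∈
        (P'.add Q).Tset (Quot.mk _ (Sum.inr a₀)) := by
      rw [← hv]
      exact Tset_map (P.add Q) (P'.add Q) φV φE hsrc htgt hs _
        (inr_mem_Tset P Q a)
    rcases add_cases P' Q (φV (Quot.mk _ (Sum.inr a))) with ⟨b, hb⟩ | ⟨a', ha'⟩
    · exact absurd (hb ▸ hmem) (inl_not_mem_Tset P' Q hP' hvne b)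
    · refine ⟨a', ha', fun hcon => ?_⟩
      have : φV (Quot.mk _ (Sum.inr a)) = Quot.mk (addRel P' Q) (Sum.inl P'.t) := by
        rw [ha', hcon, ← junction_eq]
      exact (inl_not_mem_Tset P' Q hP' hvne P'.t) (this ▸ hmem)
  choose F hF1 hF2 using key
  have Finj : Function.Injective F := by
    intro a₁ a₂ h12
    have : φV (Quot.mk _ (Sum.inr a₁)) = φV (Quot.mk _ (Sum.inr a₂)) := by
      rw [hF1 a₁, hF1 a₂, h12]
    exact (add_mk_inr_inj P Q).mp (φV.injective this)
  obtain ⟨a, ha⟩ := Finite.injective_iff_surjective.mp Finj Q.s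
  exact hF2 a ha

/-- Impossible: junction images shift strictly into both outer parts. -/
theorem case_BC (hQ : Q.Connected)
    (φV : (P.add Q).V ≃ (P'.add Q).V) (φE : (P.add Q).E ≃ (P'.add Q).E)
    (hsrc : ∀ e, (P'.add Q).src (φE e) = φV ((P.add Q).src e))
    (htgt : ∀ e, (P'.add Q).tgt (φE e) = φV ((P.add Q).tgt e))
    (ht : φV (P.add Q).t = (P'.add Q).t)
    (c₀ : P'.V) (hc₀ : c₀ ≠ P'.t)
    (hv : φV (Quot.mk _ (Sum.inl P.t)) = Quot.mk _ (Sum.inl c₀))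
    (b₀ : P.V) (hb₀ : b₀ ≠ P.t)
    (hv' : φV.symm (Quot.mk _ (Sum.inl P'.t)) = Quot.mk _ (Sum.inl b₀)) : False := by
  have hsrc' := iso_symm_src (P.add Q) (P'.add Q) φV φE hsrc
  have htgt' := iso_symm_tgt (P.add Q) (P'.add Q) φV φE htgt
  have ht2 : φV.symm (P'.add Q).t = (P.add Q).t := by
    rw [← ht, Equiv.symm_apply_apply]
  have hvne : ∀ a : Q.V,
      (Quot.mk (addRel P' Q) (Sum.inl c₀)) ≠ Quot.mk _ (Sum.inr a) := by
    intro a hcon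
    exact hc₀ ((add_mk_inl_eq_inr P' Q).mp hcon).1
  have hvne' : ∀ a : Q.V,
      (Quot.mk (addRel P Q) (Sum.inl b₀)) ≠ Quot.mk _ (Sum.inr a) := by
    intro a hcon
    exact hb₀ ((add_mk_inl_eq_inr P Q).mp hcon).1
  have key1 : ∀ b : P.V, ∃ c : P'.V,
      φV (Quot.mk _ (Sum.inl b)) = Quot.mk _ (Sum.inl c) ∧ c ≠ P'.t := by
    intro b
    have hmem : φV (Quot.mk _ (Sum.inl b)) ∈
        (P'.add Q).Hset (Quot.mk _ (Sum.inl c₀)) := by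
      rw [← hv]
      exact Hset_map (P.add Q) (P'.add Q) φV φE hsrc htgt ht _ (inl_mem_Hset P Q b)
    rcases add_cases P' Q (φV (Quot.mk _ (Sum.inl b))) with ⟨c, hc⟩ | ⟨a, ha⟩
    · refine ⟨c, hc, fun hcon => ?_⟩
      have : φV (Quot.mk _ (Sum.inl b)) = Quot.mk (addRel P' Q) (Sum.inr Q.s) := by
        rw [hc, hcon, junction_eq]
      exact (inr_not_mem_Hset P' Q hQ hvne Q.s) (this ▸ hmem)
    · exact absurd (ha ▸ hmem) (inr_not_mem_Hset P' Q hQ hvne a)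
  have key2 : ∀ c : P'.V, ∃ b : P.V,
      φV.symm (Quot.mk _ (Sum.inl c)) = Quot.mk _ (Sum.inl b) ∧ b ≠ P.t := by
    intro c
    have hmem : φV.symm (Quot.mk _ (Sum.inl c)) ∈
        (P.add Q).Hset (Quot.mk _ (Sum.inl b₀)) := by
      rw [← hv']
      exact Hset_map (P'.add Q) (P.add Q) φV.symm φE.symm hsrc' htgt' ht2 _
        (inl_mem_Hset P' Q c)
    rcases add_cases P Q (φV.symm (Quot.mk _ (Sum.inl c))) with ⟨b, hb⟩ | ⟨a, ha⟩
    · refine ⟨b, hb, fun hcon => ?_⟩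
      have : φV.symm (Quot.mk _ (Sum.inl c)) = Quot.mk (addRel P Q) (Sum.inr Q.s) := by
        rw [hb, hcon, junction_eq]
      exact (inr_not_mem_Hset P Q hQ hvne' Q.s) (this ▸ hmem)
    · exact absurd (ha ▸ hmem) (inr_not_mem_Hset P Q hQ hvne' a)
  choose j₁ hj₁ hj₁t using key1
  choose j₂ hj₂ hj₂t using key2
  have hinj : Function.Injective (fun b => j₂ (j₁ b)) := by
    intro b₁ b₂ h12
    have e1 : φV.symm (Quot.mk _ (Sum.inl (j₁ b₁))) = φV.symm (Quot.mk _ (Sum.inl (j₁ b₂))) := by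
      rw [hj₂ (j₁ b₁), hj₂ (j₁ b₂)]
      simp only at h12
      rw [h12]
    have e2 : (Quot.mk (addRel P' Q) (Sum.inl (j₁ b₁))) = Quot.mk _ (Sum.inl (j₁ b₂)) :=
      φV.symm.injective e1
    have e3 : j₁ b₁ = j₁ b₂ := (add_mk_inl_inj P' Q).mp e2
    have e4 : φV (Quot.mk _ (Sum.inl b₁)) = φV (Quot.mk _ (Sum.inl b₂)) := by
      rw [hj₁ b₁, hj₁ b₂, e3]
    exact (add_mk_inl_inj P Q).mp (φV.injective e4)
  obtain ⟨b, hb⟩ := Finite.injective_iff_surjective.mp hinj P.t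
  exact hj₂t (j₁ b) hb

end Position

/-- The junction vertex is preserved by any isomorphism of sums with
connected summands. -/
theorem junction_fixed (B C A : FlowGraph)
    (hA : A.Connected) (hB : B.Connected) (hC : C.Connected)
    (φV : (B.add A).V ≃ (C.add A).V) (φE : (B.add A).E ≃ (C.add A).E)
    (hsrc : ∀ e, (C.add A).src (φE e) = φV ((B.add A).src e))
    (htgt : ∀ e, (C.add A).tgt (φE e) = φV ((B.add A).tgt e))
    (hs : φV (B.add A).s = (C.add A).s) (ht : φV (B.add A).t = (C.add A).t) :
    φV (Quot.mk _ (Sum.inl B.t)) = Quot.mk _ (Sum.inl C.t) := by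
  have hsrc' := iso_symm_src (B.add A) (C.add A) φV φE hsrc
  have htgt' := iso_symm_tgt (B.add A) (C.add A) φV φE htgt
  have hs2 : φV.symm (C.add A).s = (B.add A).s := by rw [← hs, Equiv.symm_apply_apply]
  have ht2 : φV.symm (C.add A).t = (B.add A).t := by rw [← ht, Equiv.symm_apply_apply]
  rcases add_cases C A (φV (Quot.mk _ (Sum.inl B.t))) with ⟨c, hc⟩ | ⟨a, ha⟩
  · by_cases hct : c = C.t
    · rw [hc, hct]
    · rcases add_cases B A (φV.symm (Quot.mk _ (Sum.inl C.t))) with ⟨b, hb⟩ | ⟨a', ha'⟩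
      · by_cases hbt : b = B.t
        · exfalso
          rw [hbt] at hb
          have : Quot.mk (addRel C A) (Sum.inl C.t) = φV (Quot.mk _ (Sum.inl B.t)) := by
            rw [← hb]; exact (φV.apply_symm_apply _).symm
          rw [hc] at this
          exact hct ((add_mk_inl_inj C A).mp this).symm
        · exact (case_BC B A C hA φV φE hsrc htgt ht c hct hc b hbt hb).elim
      · by_cases has : a' = A.s
        · exfalso
          rw [has] at ha'
          have hBj : Quot.mk (addRel B A) (Sum.inr A.s) = Quot.mk _ (Sum.inl B.t) :=
            (junction_eq B A).symm
          rw [hBj] at ha'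
          have : Quot.mk (addRel C A) (Sum.inl C.t) = φV (Quot.mk _ (Sum.inl B.t)) := by
            rw [← ha']; exact (φV.apply_symm_apply _).symm
          rw [hc] at this
          exact hct ((add_mk_inl_inj C A).mp this).symm
        · exact (case_A C A B hB φV.symm φE.symm hsrc' htgt' hs2 a' has ha').elim
  · by_cases has : a = A.s
    · rw [ha, has]
      exact (junction_eq C A).symm
    · exact (case_A B A C hC φV φE hsrc htgt hs a has ha).elim

end FlowGraph

open FlowGraph in
/-- Right-cancellation law for `⊕`. -/
theorem flowGraph_add_right_cancel (A B C : FlowGraph)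
    (hA : A.Connected) (hB : B.Connected) (hC : C.Connected)
    (h : (B.add A).Iso (C.add A)) :
    B.Iso C := by
  classical
  obtain ⟨φV, φE, hsrc, htgt, hs, ht⟩ := h
  have hjt := junction_fixed B C A hA hB hC φV φE hsrc htgt hs ht
  let fV : (B.V ⊕ {a : A.V // a ≠ A.s}) ≃ (C.V ⊕ {a : A.V // a ≠ A.s}) :=
    (addEquiv B A).symm.trans (φV.trans (addEquiv C A))
  let fE : (B.E ⊕ A.E) ≃ (C.E ⊕ A.E) := φE
  have hfV_def : ∀ x, fV x = addEquiv C A (φV ((addEquiv B A).symm x)) := fun _ => rfl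
  have hfE_def : ∀ x, fE x = φE x := fun _ => rfl
  let σXs : B.E ⊕ A.E → B.V ⊕ {a : A.V // a ≠ A.s} :=
    fun z => addEquiv B A ((B.add A).src z)
  let σYs : C.E ⊕ A.E → C.V ⊕ {a : A.V // a ≠ A.s} :=
    fun z => addEquiv C A ((C.add A).src z)
  let σXt : B.E ⊕ A.E → B.V ⊕ {a : A.V // a ≠ A.s} :=
    fun z => addEquiv B A ((B.add A).tgt z)
  let σYt : C.E ⊕ A.E → C.V ⊕ {a : A.V // a ≠ A.s} :=
    fun z => addEquiv C A ((C.add A).tgt z)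
  have hfVt : fV (Sum.inl B.t) = Sum.inl C.t := by
    rw [hfV_def, addEquiv_symm_inl, hjt]
    exact addEquiv_mk_inl C A C.t
  have hgVt : GMaux.g fV B.t = C.t :=
    GMaux.g_eq fV ⟨Sum.inl B.t, Relation.ReflTransGen.refl, hfVt⟩
  have hfVs : fV (Sum.inl B.s) = Sum.inl C.s := by
    rw [hfV_def, addEquiv_symm_inl]
    have hs' : φV (Quot.mk (addRel B A) (Sum.inl B.s)) =
        Quot.mk (addRel C A) (Sum.inl C.s) := hs
    rw [hs']
    exact addEquiv_mk_inl C A C.s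
  have hgVs : GMaux.g fV B.s = C.s :=
    GMaux.g_eq fV ⟨Sum.inl B.s, Relation.ReflTransGen.refl, hfVs⟩
  -- source compatibility data
  have h1src : ∀ x : B.E ⊕ A.E,
      addEquiv C A ((C.add A).src (fE x)) = fV (addEquiv B A ((B.add A).src x)) := by
    intro x
    rw [hfV_def, Equiv.symm_apply_apply, hfE_def, hsrc x]
  have h1tgt : ∀ x : B.E ⊕ A.E,
      addEquiv C A ((C.add A).tgt (fE x)) = fV (addEquiv B A ((B.add A).tgt x)) := by
    intro x
    rw [hfV_def, Equiv.symm_apply_apply, hfE_def, htgt x]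
  have cXa : ∀ a : A.E, addEquiv B A ((B.add A).src (Sum.inr a)) =
      addNorm B A (Sum.inr (A.src a)) := fun _ => rfl
  have cYa : ∀ a : A.E, addEquiv C A ((C.add A).src (Sum.inr a)) =
      addNorm C A (Sum.inr (A.src a)) := fun _ => rfl
  have cXa' : ∀ a : A.E, addEquiv B A ((B.add A).tgt (Sum.inr a)) =
      addNorm B A (Sum.inr (A.tgt a)) := fun _ => rfl
  have cYa' : ∀ a : A.E, addEquiv C A ((C.add A).tgt (Sum.inr a)) =
      addNorm C A (Sum.inr (A.tgt a)) := fun _ => rfl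
  have h2src : ∀ (a : A.E) (a₂ : {a : A.V // a ≠ A.s}),
      (addEquiv B A ((B.add A).src (Sum.inr a)) = Sum.inr a₂) ↔
      (addEquiv C A ((C.add A).src (Sum.inr a)) = Sum.inr a₂) := by
    intro a a₂
    rw [cXa, cYa]
    by_cases hsa : A.src a = A.s
    · rw [hsa, addNorm_inr_s, addNorm_inr_s]
      simp
    · rw [addNorm_inr_of_ne B A hsa, addNorm_inr_of_ne C A hsa]
      simp
  have h2tgt : ∀ (a : A.E) (a₂ : {a : A.V // a ≠ A.s}),
      (addEquiv B A ((B.add A).tgt (Sum.inr a)) = Sum.inr a₂) ↔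
      (addEquiv C A ((C.add A).tgt (Sum.inr a)) = Sum.inr a₂) := by
    intro a a₂
    rw [cXa', cYa']
    by_cases hsa : A.tgt a = A.s
    · rw [hsa, addNorm_inr_s, addNorm_inr_s]
      simp
    · rw [addNorm_inr_of_ne B A hsa, addNorm_inr_of_ne C A hsa]
      simp
  have h3src : ∀ (a : A.E) (b₂ : B.V) (c₂ : C.V),
      addEquiv B A ((B.add A).src (Sum.inr a)) = Sum.inl b₂ →
      addEquiv C A ((C.add A).src (Sum.inr a)) = Sum.inl c₂ →
      GMaux.g fV b₂ = c₂ := by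
    intro a b₂ c₂ h1' h2'
    rw [cXa] at h1'
    rw [cYa] at h2'
    by_cases hsa : A.src a = A.s
    · rw [hsa, addNorm_inr_s] at h1' h2'
      have hb : b₂ = B.t := (Sum.inl.inj h1').symm
      have hc : c₂ = C.t := (Sum.inl.inj h2').symm
      rw [hb, hc]
      exact hgVt
    · rw [addNorm_inr_of_ne B A hsa] at h1'
      exact absurd h1' (by simp)
  have h3tgt : ∀ (a : A.E) (b₂ : B.V) (c₂ : C.V),
      addEquiv B A ((B.add A).tgt (Sum.inr a)) = Sum.inl b₂ →
      addEquiv C A ((C.add A).tgt (Sum.inr a)) = Sum.inl c₂ →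
      GMaux.g fV b₂ = c₂ := by
    intro a b₂ c₂ h1' h2'
    rw [cXa'] at h1'
    rw [cYa'] at h2'
    by_cases hsa : A.tgt a = A.s
    · rw [hsa, addNorm_inr_s] at h1' h2'
      have hb : b₂ = B.t := (Sum.inl.inj h1').symm
      have hc : c₂ = C.t := (Sum.inl.inj h2').symm
      rw [hb, hc]
      exact hgVt
    · rw [addNorm_inr_of_ne B A hsa] at h1'
      exact absurd h1' (by simp)
  refine ⟨GMaux.gEquiv fV, GMaux.gEquiv fE, ?_, ?_, hgVs, hgVt⟩
  · intro e
    have := GMaux.g_of_sync fE fV σXs σYs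
      h1src h2src h3src
      (b := e) (b₂ := B.src e) (c₂ := C.src (GMaux.g fE e)) rfl rfl
    exact this.symm
  · intro e
    have := GMaux.g_of_sync fE fV σXt σYt
      h1tgt h2tgt h3tgt
      (b := e) (b₂ := B.tgt e) (c₂ := C.tgt (GMaux.g fE e)) rfl rfl
    exact this.symm
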